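/- Let $P$ be a Markov (probability) kernel on $\mathbb{R}^d$, and suppose there exist constants $p>1$, $r>0$ and $c\ge 0$ such that for all bounded measurable $f:\mathbb{R}^d\to[0,\infty)$ and all $x,y\in\mathbb{R}^d$ with $|x-y|\le r$, $\Big(\int f\,dP(x,\cdot)\Big)^p \le \Big(\int f^p\,dP(y,\cdot)\Big)\,e^{c|x-y|^2}$. Then $P$ is strong Feller: for every bounded measurable $f:\mathbb{R}^d\to\mathbb{R}$, the function $x\mapsto \int f\,dP(x,\cdot)$ is continuous; in particular $\lim_{|y-x|\to 0}\int f\,dP(y,\cdot) = \int f\,dP(x,\cdot)$ for every $x$. -/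

import Mathlib

open MeasureTheory Set ProbabilityTheory Filter Topology

/-- Tangent-line inequality for convex `rpow`. -/
lemma aux_rpow_tangent {q a s : ℝ} (hq : 1 ≤ q) (ha : 0 < a) (hs : 0 ≤ s) :
    a ^ q + q * a ^ (q - 1) * (s - a) ≤ s ^ q := by
  have h1 : (-1 : ℝ) ≤ s / a - 1 := by
    have : 0 ≤ s / a := div_nonneg hs ha.le
    linarith
  have key := one_add_mul_self_le_rpow_one_add h1 hq
  have h2 : (1 : ℝ) + (s / a - 1) = s / a := by ring
  rw [h2, Real.div_rpow hs ha.le] at key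
  have haq : 0 < a ^ q := Real.rpow_pos_of_pos ha q
  rw [le_div_iff₀ haq] at key
  have h3 : a ^ (q - 1) = a ^ q / a := Real.rpow_sub_one ha.ne' q
  calc a ^ q + q * a ^ (q - 1) * (s - a) = (1 + q * (s / a - 1)) * a ^ q := by
        rw [h3]; field_simp
    _ ≤ s ^ q := key
  
/-- Bernoulli: `q*t ≤ t^q + (q-1)` for `t ≥ 0`, `q ≥ 1`. -/
lemma aux_bernoulli {q t : ℝ} (hq : 1 ≤ q) (ht : 0 ≤ t) :
    q * t ≤ t ^ q + (q - 1) := by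
  have h1 : (-1 : ℝ) ≤ t - 1 := by linarith
  have key := one_add_mul_self_le_rpow_one_add h1 hq
  have h2 : (1 : ℝ) + (t - 1) = t := by ring
  rw [h2] at key
  linarith

/-- Positivity of the convexity defect at `1 - ε`. -/
lemma aux_delta_pos {q ε : ℝ} (hq : 1 < q) (hε0 : 0 < ε) (hε1 : ε < 1) :
    0 < (1 - ε) ^ q - 1 + q * ε := by
  have h1 : (-1 : ℝ) ≤ -ε := by linarith
  have key := one_add_mul_self_lt_rpow_one_add h1 (by simpa using hε0.ne') hq
  have h2 : (1 : ℝ) + -ε = 1 - ε := by ring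
  rw [h2] at key
  nlinarith

/-- Lower bound on the convexity defect function on `[0, 1-ε]`. -/
lemma aux_defect_lb {q ε t : ℝ} (hq : 1 < q) (hε0 : 0 < ε) (hε1 : ε < 1)
    (ht0 : 0 ≤ t) (ht : t ≤ 1 - ε) :
    (1 - ε) ^ q - 1 + q * ε ≤ t ^ q - q * t + (q - 1) := by
  set a : ℝ := 1 - ε with ha_def
  have ha : 0 < a := by simp only [ha_def]; linarith
  have ha1 : a ≤ 1 := by simp only [ha_def]; linarith
  have htan := aux_rpow_tangent hq.le ha ht0 (s := t)
  have hle1 : a ^ (q - 1) ≤ 1 := Real.rpow_le_one ha.le ha1 (by linarith)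
  have h0 : 0 ≤ a ^ (q - 1) := Real.rpow_nonneg ha.le _
  nlinarith [mul_nonneg (mul_nonneg (by linarith : (0:ℝ) ≤ q) (by linarith : 0 ≤ 1 - a ^ (q-1))) (by linarith : 0 ≤ a - t)]


lemma aux_tmul {q t : ℝ} (hq0 : q ≠ 0) (ht : 0 ≤ t) : t * t ^ (q - 1) = t ^ q := by
  rw [← Real.rpow_one_add' ht (by simpa using hq0)]
  ring_nf

lemma key_estimate {Ω : Type*} [MeasurableSpace Ω] (μ ν : Measure Ω)
    [IsProbabilityMeasure μ] [IsProbabilityMeasure ν] {p E : ℝ} (hp : 1 < p) (hE : 1 ≤ E)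
    (H : ∀ g : Ω → ℝ, Measurable g → (∀ z, 0 ≤ g z) → (∃ C, ∀ z, g z ≤ C) →
      (∫ z, g z ∂ν) ^ p ≤ (∫ z, g z ^ p ∂μ) * E)
    {f : Ω → ℝ} (hf : Measurable f) {M : ℝ} (hM : ∀ z, |f z| ≤ M)
    {ε : ℝ} (hε0 : 0 < ε) (hε1 : ε < 1) :
    |(∫ z, f z ∂ν) - ∫ z, f z ∂μ| ≤
      2 * M * (ε + (E ^ (1 / (p - 1)) - 1) /
        ((1 - ε) ^ (p / (p - 1)) - 1 + (p / (p - 1)) * ε)) := by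
  have hΩ : Nonempty Ω := by
    by_contra h
    rw [not_nonempty_iff] at h
    have h1 : μ univ = 1 := measure_univ
    rw [Set.univ_eq_empty_iff.2 h] at h1
    simp at h1
  have hM0 : 0 ≤ M := le_trans (abs_nonneg _) (hM (Classical.arbitrary Ω))
  have hp1 : (0:ℝ) < p - 1 := by linarith
  set q : ℝ := p / (p - 1) with hq_def
  have hq : 1 < q := by
    rw [hq_def, lt_div_iff₀ hp1]; linarith
  have hq1 : q - 1 = 1 / (p - 1) := by
    rw [hq_def]; field_simp; ring
  -- absolute continuity
  have hac : ν ≪ μ := by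
    apply Measure.AbsolutelyContinuous.mk
    intro A hA hA0
    have hind := H (A.indicator (fun _ => (1:ℝ)))
      (measurable_const.indicator hA)
      (fun z => Set.indicator_nonneg (fun _ _ => zero_le_one) z)
      ⟨1, fun z => Set.indicator_le_self' (fun _ _ => zero_le_one) z⟩
    have h1 : ∀ z, (A.indicator (fun _ => (1:ℝ)) z) ^ p = A.indicator (fun _ => (1:ℝ)) z := by
      intro z
      by_cases hz : z ∈ A
      · simp [Set.indicator_of_mem hz]
      · simp [Set.indicator_of_notMem hz, Real.zero_rpow (by positivity : p ≠ 0)]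
    simp only [h1] at hind
    have h2 : ∫ z, A.indicator (fun _ => (1:ℝ)) z ∂μ = (μ A).toReal := integral_indicator_one hA
    have h3 : ∫ z, A.indicator (fun _ => (1:ℝ)) z ∂ν = (ν A).toReal := integral_indicator_one hA
    rw [h2, h3, hA0] at hind
    simp only [ENNReal.toReal_zero, zero_mul] at hind
    have h4 : ((ν A).toReal) ^ p = 0 :=
      le_antisymm hind (Real.rpow_nonneg ENNReal.toReal_nonneg _)
    have h5 : (ν A).toReal = 0 := by
      by_contra h5
      have : 0 < (ν A).toReal := lt_of_le_of_ne ENNReal.toReal_nonneg (Ne.symm h5)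
      exact absurd h4 (ne_of_gt (Real.rpow_pos_of_pos this p))
    rwa [ENNReal.toReal_eq_zero_iff, or_iff_left (measure_ne_top ν A)] at h5
  -- density
  set ρ : Ω → ℝ := fun z => (ν.rnDeriv μ z).toReal with hρ_def
  have hρmeas : Measurable ρ := (Measure.measurable_rnDeriv ν μ).ennreal_toReal
  have hρnn : ∀ z, 0 ≤ ρ z := fun z => ENNReal.toReal_nonneg
  have hρint : Integrable ρ μ := Measure.integrable_toReal_rnDeriv
  have hρ1 : ∫ z, ρ z ∂μ = 1 := by
    rw [Measure.integral_toReal_rnDeriv hac]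
    simp
  have hCV : ∀ g : Ω → ℝ, ∫ z, ρ z * g z ∂μ = ∫ z, g z ∂ν := by
    intro g
    simpa [smul_eq_mul] using integral_rnDeriv_smul hac (f := g)
  -- truncated density
  set T : ℕ → Ω → ℝ := fun n z => min (ρ z) n with hT_def
  have hTmeas : ∀ n, Measurable (T n) := fun n => hρmeas.min measurable_const
  have hT0 : ∀ n z, 0 ≤ T n z := fun n z => le_min (hρnn z) (Nat.cast_nonneg n)
  have hTle : ∀ n z, T n z ≤ ρ z := fun n z => min_le_left _ _
  have hTlen : ∀ n z, T n z ≤ n := fun n z => min_le_right _ _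
  have hq1pos : (0:ℝ) < q - 1 := by linarith
  -- moment bound
  have hmoment : ∀ n : ℕ, ∫ z, T n z ^ q ∂μ ≤ E ^ (1 / (p - 1)) := by
    intro n
    set g : Ω → ℝ := fun z => T n z ^ (q - 1) with hg_def
    have hgmeas : Measurable g :=
      (Real.continuous_rpow_const hq1pos.le).measurable.comp (hTmeas n)
    have hgnn : ∀ z, 0 ≤ g z := fun z => Real.rpow_nonneg (hT0 n z) _
    have hgbd : ∀ z, g z ≤ (n:ℝ) ^ (q - 1) := fun z =>
      Real.rpow_le_rpow (hT0 n z) (hTlen n z) hq1pos.le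
    have hHg := H g hgmeas hgnn ⟨_, hgbd⟩
    have hgp : ∀ z, g z ^ p = T n z ^ q := by
      intro z
      simp only [hg_def]
      rw [← Real.rpow_mul (hT0 n z)]
      congr 1
      rw [hq1, hq_def]
      field_simp
    have hρg_int : Integrable (fun z => ρ z * g z) μ := by
      apply Integrable.mono' (hρint.const_mul ((n:ℝ) ^ (q - 1)))
        (hρmeas.mul hgmeas).aestronglyMeasurable
      filter_upwards with z
      rw [Real.norm_eq_abs, Pi.mul_apply, abs_of_nonneg (mul_nonneg (hρnn z) (hgnn z))]
      calc ρ z * g z ≤ ρ z * ((n:ℝ) ^ (q - 1)) :=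
            mul_le_mul_of_nonneg_left (hgbd z) (hρnn z)
        _ = (n:ℝ) ^ (q - 1) * ρ z := mul_comm _ _
    have hlow : ∫ z, T n z ^ q ∂μ ≤ ∫ z, g z ∂ν := by
      rw [← hCV g]
      apply integral_mono_of_nonneg
      · filter_upwards with z using Real.rpow_nonneg (hT0 n z) q
      · exact hρg_int
      · filter_upwards with z
        calc T n z ^ q = T n z * g z := (aux_tmul (by linarith : q ≠ 0) (hT0 n z)).symm
          _ ≤ ρ z * g z := mul_le_mul_of_nonneg_right (hTle n z) (hgnn z)
    set A : ℝ := ∫ z, T n z ^ q ∂μ with hA_def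
    have hA0 : 0 ≤ A := integral_nonneg (fun z => Real.rpow_nonneg (hT0 n z) q)
    have hchain : A ^ p ≤ A * E := by
      calc A ^ p ≤ (∫ z, g z ∂ν) ^ p := Real.rpow_le_rpow hA0 hlow (by linarith)
        _ ≤ (∫ z, g z ^ p ∂μ) * E := hHg
        _ = A * E := by
          congr 1
          exact integral_congr_ae (Filter.Eventually.of_forall hgp)
    rcases eq_or_lt_of_le hA0 with h | h
    · rw [← h]
      exact Real.rpow_nonneg (by linarith) _
    · have hApow : A ^ (p - 1) * A = A ^ p := by
        have h1 : A ^ ((p - 1) + 1) = A ^ (p - 1) * A ^ (1:ℝ) := Real.rpow_add h (p - 1) 1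
        rw [Real.rpow_one] at h1
        rw [← h1]
        norm_num
      have h3 : A ^ (p - 1) ≤ E := by
        have h2 : A ^ (p - 1) * A ≤ E * A := by rw [hApow]; linarith
        exact le_of_mul_le_mul_right h2 h
      calc A = (A ^ (p - 1)) ^ (1 / (p - 1)) := by
            rw [← Real.rpow_mul hA0, mul_one_div_cancel hp1.ne', Real.rpow_one]
        _ ≤ E ^ (1 / (p - 1)) := Real.rpow_le_rpow (Real.rpow_nonneg hA0 _) h3 (by positivity)
  -- the set where the density is small
  set δ0 : ℝ := (1 - ε) ^ q - 1 + q * ε with hδ0_def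
  have hδ0 : 0 < δ0 := aux_delta_pos hq hε0 hε1
  set S : Set Ω := {z | ρ z ≤ 1 - ε} with hS_def
  have hS : MeasurableSet S := measurableSet_le hρmeas measurable_const
  set s : ℝ := (μ S).toReal with hs_def
  have hs0 : 0 ≤ s := ENNReal.toReal_nonneg
  have hTint : ∀ n : ℕ, Integrable (T n) μ := fun n =>
    (integrable_const ((n:ℝ))).mono' (hTmeas n).aestronglyMeasurable
      (Filter.Eventually.of_forall fun z => by
        rw [Real.norm_eq_abs, abs_of_nonneg (hT0 n z)]; exact hTlen n z)
  have hTqint : ∀ n : ℕ, Integrable (fun z => T n z ^ q) μ := fun n =>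
    (integrable_const ((n:ℝ) ^ q)).mono'
      ((Real.continuous_rpow_const (by linarith : (0:ℝ) ≤ q)).measurable.comp
        (hTmeas n)).aestronglyMeasurable
      (Filter.Eventually.of_forall fun z => by
        rw [Real.norm_eq_abs, abs_of_nonneg (Real.rpow_nonneg (hT0 n z) q)]
        exact Real.rpow_le_rpow (hT0 n z) (hTlen n z) (by linarith))
  have hper : ∀ n : ℕ, 1 ≤ n → δ0 * s ≤ E ^ (1 / (p - 1)) - q * (∫ z, T n z ∂μ) + (q - 1) := by
    intro n hn
    have hpoint : ∀ z, δ0 * S.indicator (fun _ => (1:ℝ)) z ≤ T n z ^ q - q * T n z + (q - 1) := by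
      intro z
      by_cases hz : z ∈ S
      · rw [Set.indicator_of_mem hz]
        have hρz : ρ z ≤ 1 - ε := hz
        have hn1 : (1:ℝ) ≤ n := by exact_mod_cast hn
        have hTz : T n z = ρ z := min_eq_left (le_trans hρz (by linarith))
        rw [hTz, mul_one]
        have := aux_defect_lb hq hε0 hε1 (hρnn z) hρz
        linarith
      · rw [Set.indicator_of_notMem hz, mul_zero]
        have := aux_bernoulli hq.le (hT0 n z)
        linarith
    have hlint : Integrable (fun z => δ0 * S.indicator (fun _ => (1:ℝ)) z) μ :=
      ((integrable_const 1).indicator hS).const_mul δ0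
    have hqTint : Integrable (fun z => q * T n z) μ := (hTint n).const_mul q
    have hsubint : Integrable (fun z => T n z ^ q - q * T n z) μ := (hTqint n).sub hqTint
    have hrint : Integrable (fun z => T n z ^ q - q * T n z + (q - 1)) μ :=
      hsubint.add (integrable_const _)
    have hmono := integral_mono hlint hrint hpoint
    have hind1 : ∫ z, S.indicator (fun _ => (1:ℝ)) z ∂μ = s := integral_indicator_one hS
    have hleft : ∫ z, δ0 * S.indicator (fun _ => (1:ℝ)) z ∂μ = δ0 * s := by
      rw [integral_const_mul, hind1]
    have hrc : ∫ z, (T n z ^ q - q * T n z + (q - 1)) ∂μ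
        = (∫ z, T n z ^ q ∂μ) - q * (∫ z, T n z ∂μ) + (q - 1) := by
      rw [integral_add hsubint (integrable_const _),
        integral_sub (hTqint n) hqTint, integral_const_mul, integral_const]
      simp [measure_univ]
    rw [hleft, hrc] at hmono
    have hmom := hmoment n
    exact hmono.trans (add_le_add_left (sub_le_sub_right hmom _) _)
  have hL : Tendsto (fun n : ℕ => ∫ z, T n z ∂μ) atTop (𝓝 1) := by
    rw [← hρ1]
    apply tendsto_integral_of_dominated_convergence ρ
      (fun n => (hTmeas n).aestronglyMeasurable) hρint
    · intro n
      filter_upwards with z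
      rw [Real.norm_eq_abs, abs_of_nonneg (hT0 n z)]
      exact hTle n z
    · filter_upwards with z
      apply tendsto_atTop_of_eventually_const (i₀ := ⌈ρ z⌉₊)
      intro n hn
      exact min_eq_left (le_trans (Nat.le_ceil _) (by exact_mod_cast hn))
  have hsb : δ0 * s ≤ E ^ (1 / (p - 1)) - 1 := by
    have htend : Tendsto (fun n : ℕ => E ^ (1 / (p - 1)) - q * (∫ z, T n z ∂μ) + (q - 1)) atTop
        (𝓝 (E ^ (1 / (p - 1)) - q * 1 + (q - 1))) :=
      (tendsto_const_nhds.sub (hL.const_mul q)).add tendsto_const_nhds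
    have := ge_of_tendsto htend (eventually_atTop.2 ⟨1, fun n hn => hper n hn⟩)
    linarith
  have hs_bound : s ≤ (E ^ (1 / (p - 1)) - 1) / δ0 := by
    rw [le_div_iff₀ hδ0]
    linarith
  -- final estimate
  have hfint : Integrable f μ := (integrable_const M).mono' hf.aestronglyMeasurable
      (Filter.Eventually.of_forall fun z => by rw [Real.norm_eq_abs]; exact hM z)
  have hρf_int : Integrable (fun z => ρ z * f z) μ := by
    apply Integrable.mono' (hρint.const_mul M) (hρmeas.mul hf).aestronglyMeasurable
    filter_upwards with z
    rw [Real.norm_eq_abs, Pi.mul_apply, abs_mul, abs_of_nonneg (hρnn z)]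
    calc ρ z * |f z| ≤ ρ z * M := mul_le_mul_of_nonneg_left (hM z) (hρnn z)
      _ = M * ρ z := mul_comm _ _
  have hdiff : (∫ z, f z ∂ν) - ∫ z, f z ∂μ = ∫ z, (ρ z - 1) * f z ∂μ := by
    rw [← hCV f, ← integral_sub hρf_int hfint]
    congr 1
    ext z
    ring
  have hmaxint : Integrable (fun z => max (1 - ρ z) 0) μ :=
    (integrable_const 1).mono' (((measurable_const.sub hρmeas).max
        measurable_const)).aestronglyMeasurable
      (Filter.Eventually.of_forall fun z => by
        rw [Real.norm_eq_abs, abs_of_nonneg (le_max_right _ _)]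
        have := hρnn z
        rcases le_total (1 - ρ z) 0 with h | h
        · rw [max_eq_right h]; norm_num
        · rw [max_eq_left h]; linarith)
  have hmax_bound : ∫ z, max (1 - ρ z) 0 ∂μ ≤ ε + s := by
    have hrint : Integrable (fun z => ε + S.indicator (fun _ => (1:ℝ)) z) μ :=
      (integrable_const ε).add ((integrable_const 1).indicator hS)
    have h1 : ∀ z, max (1 - ρ z) 0 ≤ ε + S.indicator (fun _ => (1:ℝ)) z := by
      intro z
      have h2 := hρnn z
      by_cases hz : z ∈ S
      · rw [Set.indicator_of_mem hz]
        rcases le_total (1 - ρ z) 0 with h | h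
        · rw [max_eq_right h]; linarith
        · rw [max_eq_left h]; linarith
      · rw [Set.indicator_of_notMem hz]
        have hz' : 1 - ε < ρ z := not_le.1 hz
        rcases le_total (1 - ρ z) 0 with h | h
        · rw [max_eq_right h]; linarith
        · rw [max_eq_left h]; linarith
    calc ∫ z, max (1 - ρ z) 0 ∂μ ≤ ∫ z, (ε + S.indicator (fun _ => (1:ℝ)) z) ∂μ :=
          integral_mono hmaxint hrint h1
      _ = ε + s := by
          have hind1 : ∫ z, S.indicator (fun _ => (1:ℝ)) z ∂μ = s := integral_indicator_one hS
          rw [integral_add (integrable_const ε) ((integrable_const 1).indicator hS),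
            integral_const, hind1]
          simp [measure_univ]
  have hρ1f : (fun z => (ρ z - 1) * f z) = fun z => ρ z * f z - f z := by
    ext z
    ring
  have hρfsub : Integrable (fun z => ρ z * f z - f z) μ := hρf_int.sub hfint
  have habsint : Integrable (fun z => |(ρ z - 1) * f z|) μ := by
    have he : (fun z => |(ρ z - 1) * f z|) = fun z => |ρ z * f z - f z| := by
      ext z
      congr 1
      ring
    rw [he]
    exact hρfsub.abs
  have h2 : ∀ z, |(ρ z - 1) * f z| ≤ M * (ρ z - 1) + 2 * M * max (1 - ρ z) 0 := by
    intro z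
    rw [abs_mul]
    have key : |ρ z - 1| * |f z| ≤ |ρ z - 1| * M := mul_le_mul_of_nonneg_left (hM z) (abs_nonneg _)
    have hid : |ρ z - 1| = (ρ z - 1) + 2 * max (1 - ρ z) 0 := by
      rcases le_total 1 (ρ z) with h | h
      · rw [abs_of_nonneg (by linarith), max_eq_right (by linarith)]; ring
      · rw [abs_of_nonpos (by linarith), max_eq_left (by linarith)]; ring
    calc |ρ z - 1| * |f z| ≤ |ρ z - 1| * M := key
      _ = M * (ρ z - 1) + 2 * M * max (1 - ρ z) 0 := by rw [hid]; ring
  have hsub1 : Integrable (fun z => ρ z - 1) μ := hρint.sub (integrable_const 1)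
  have h3a : Integrable (fun z => M * (ρ z - 1)) μ := hsub1.const_mul M
  have h3b : Integrable (fun z => 2 * M * max (1 - ρ z) 0) μ := hmaxint.const_mul (2 * M)
  have h3 : Integrable (fun z => M * (ρ z - 1) + 2 * M * max (1 - ρ z) 0) μ := h3a.add h3b
  have habs : |(∫ z, f z ∂ν) - ∫ z, f z ∂μ| ≤ 2 * M * (ε + s) := by
    rw [hdiff]
    have hnorm : |∫ z, (ρ z - 1) * f z ∂μ| ≤ ∫ z, |(ρ z - 1) * f z| ∂μ := by
      have h := norm_integral_le_integral_norm (μ := μ) (fun z => (ρ z - 1) * f z)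
      simpa only [Real.norm_eq_abs] using h
    calc |∫ z, (ρ z - 1) * f z ∂μ| ≤ ∫ z, |(ρ z - 1) * f z| ∂μ := hnorm
      _ ≤ ∫ z, (M * (ρ z - 1) + 2 * M * max (1 - ρ z) 0) ∂μ := integral_mono habsint h3 h2
      _ = M * ((∫ z, ρ z ∂μ) - 1) + 2 * M * ∫ z, max (1 - ρ z) 0 ∂μ := by
          rw [integral_add h3a h3b, integral_const_mul, integral_const_mul,
            integral_sub hρint (integrable_const 1), integral_const]
          simp [measure_univ]
      _ = 2 * M * ∫ z, max (1 - ρ z) 0 ∂μ := by rw [hρ1]; ring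
      _ ≤ 2 * M * (ε + s) := mul_le_mul_of_nonneg_left hmax_bound (by linarith)
  calc |(∫ z, f z ∂ν) - ∫ z, f z ∂μ| ≤ 2 * M * (ε + s) := habs
    _ ≤ 2 * M * (ε + (E ^ (1 / (p - 1)) - 1) / δ0) :=
        mul_le_mul_of_nonneg_left (by linarith) (by linarith)



/-- A local dimension-free Harnack inequality with power `p > 1` for a Markov kernel `P` on
`ℝ^d` implies that `P` is strong Feller: `x ↦ ∫ f dP(x,·)` is continuous for every bounded
measurable `f`; in particular `∫ f dP(y,·) → ∫ f dP(x,·)` as `y → x`. -/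
theorem stmt_18 {d : ℕ}
    (P : Kernel (EuclideanSpace ℝ (Fin d)) (EuclideanSpace ℝ (Fin d)))
    [IsMarkovKernel P]
    (p r c : ℝ) (hp : 1 < p) (hr : 0 < r) (hc : 0 ≤ c)
    (hHarnack : ∀ f : EuclideanSpace ℝ (Fin d) → ℝ,
      Measurable f → (∀ z, 0 ≤ f z) → (∃ M, ∀ z, f z ≤ M) →
      ∀ x y : EuclideanSpace ℝ (Fin d), ‖x - y‖ ≤ r →
        (∫ z, f z ∂(P x)) ^ p ≤ (∫ z, f z ^ p ∂(P y)) * Real.exp (c * ‖x - y‖ ^ 2)) :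
    ∀ f : EuclideanSpace ℝ (Fin d) → ℝ, Measurable f → (∃ M, ∀ z, |f z| ≤ M) →
      Continuous (fun x => ∫ z, f z ∂(P x)) ∧
      ∀ x, Tendsto (fun y => ∫ z, f z ∂(P y)) (nhds x) (nhds (∫ z, f z ∂(P x))) := by
  intro f hf hbdd
  obtain ⟨M, hM⟩ := hbdd
  have hM0 : 0 ≤ M := le_trans (abs_nonneg _) (hM 0)
  have hp1 : (0:ℝ) < p - 1 := by linarith
  have hq : 1 < p / (p - 1) := by
    rw [lt_div_iff₀ hp1]; linarith
  have htend : ∀ x, Tendsto (fun y => ∫ z, f z ∂(P y)) (𝓝 x) (𝓝 (∫ z, f z ∂(P x))) := by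
    intro x
    rw [Metric.tendsto_nhds]
    intro η hη
    set B : ℝ := η / (8 * (M + 1)) with hB_def
    have hB : 0 < B := by positivity
    have hBη : 8 * (M + 1) * B = η := by
      rw [hB_def]; field_simp
    set ε : ℝ := min (1/2) B with hε_def
    have hε0 : 0 < ε := lt_min (by norm_num) hB
    have hε1 : ε < 1 := lt_of_le_of_lt (min_le_left _ _) (by norm_num)
    have hεB : ε ≤ B := min_le_right _ _
    set δ0 : ℝ := (1 - ε) ^ (p / (p - 1)) - 1 + (p / (p - 1)) * ε with hδ0_def
    have hδ0 : 0 < δ0 := aux_delta_pos hq hε0 hε1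
    have hGcont : Tendsto
        (fun y : EuclideanSpace ℝ (Fin d) =>
          Real.exp (c * ‖y - x‖ ^ 2) ^ ((1:ℝ) / (p - 1))) (𝓝 x) (𝓝 1) := by
      have h1 : Continuous (fun y : EuclideanSpace ℝ (Fin d) => Real.exp (c * ‖y - x‖ ^ 2)) :=
        Real.continuous_exp.comp (continuous_const.mul
          ((continuous_id.sub continuous_const).norm.pow 2))
      have h2 : Continuous (fun y : EuclideanSpace ℝ (Fin d) =>
          Real.exp (c * ‖y - x‖ ^ 2) ^ ((1:ℝ) / (p - 1))) :=
        (Real.continuous_rpow_const (by positivity)).comp h1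
      have h3 := h2.tendsto x
      simpa [sub_self, Real.one_rpow] using h3
    have hev1 : ∀ᶠ y in 𝓝 x,
        Real.exp (c * ‖y - x‖ ^ 2) ^ ((1:ℝ) / (p - 1)) < 1 + δ0 * B :=
      hGcont.eventually_lt_const (by nlinarith)
    have hev2 : ∀ᶠ y in 𝓝 x, ‖y - x‖ ≤ r := by
      filter_upwards [Metric.closedBall_mem_nhds x hr] with y hy
      rw [← dist_eq_norm]
      exact Metric.mem_closedBall.1 hy
    filter_upwards [hev1, hev2] with y hGy hyr
    set E : ℝ := Real.exp (c * ‖y - x‖ ^ 2) with hE_def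
    have hE1 : 1 ≤ E := Real.one_le_exp (by positivity)
    have hkey := key_estimate (P x) (P y) hp hE1
      (fun g hg h0 hb => hHarnack g hg h0 hb y x hyr) hf hM hε0 hε1
    rw [Real.dist_eq]
    have hEq1 : 1 ≤ E ^ ((1:ℝ) / (p - 1)) := by
      have := Real.rpow_le_rpow zero_le_one hE1 (by positivity : (0:ℝ) ≤ 1 / (p - 1))
      rwa [Real.one_rpow] at this
    set t : ℝ := (E ^ ((1:ℝ) / (p - 1)) - 1) / δ0 with ht_def
    have ht0 : 0 ≤ t := div_nonneg (by linarith) hδ0.le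
    have htB : t < B := by
      rw [ht_def, div_lt_iff₀ hδ0]
      have : E ^ ((1:ℝ) / (p - 1)) < 1 + δ0 * B := hGy
      nlinarith
    have hchain : |(∫ z, f z ∂(P y)) - ∫ z, f z ∂(P x)| ≤ 2 * M * (ε + t) := hkey
    have h4 : 2 * M * (ε + t) ≤ 2 * (M + 1) * (ε + t) := by nlinarith
    have h5 : 2 * (M + 1) * (ε + t) < 2 * (M + 1) * (2 * B) := by
      apply mul_lt_mul_of_pos_left _ (by linarith)
      linarith
    have h6 : 2 * (M + 1) * (2 * B) < η := by nlinarith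
    linarith [hchain]
  exact ⟨continuous_iff_continuousAt.2 htend, htend⟩
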